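/- For every r ∈ (0,1) and every ρ > 0, one has H_{r,ρ}(0) = 0; equivalently, for every q ∈ (0,1), Σ_{n=0}^∞ q^{−n} / ∏_{k=1}^{n} (1 − q^{−k}) = 0 (with q = r²). -/

import Mathlib

noncomputable def psi (r : ℝ) : ℝ :=
  Real.sqrt (2 / Real.pi) * ∏' n : ℕ, (1 - r ^ (2 * n + 2)) / (1 - r ^ (2 * n + 1))

noncomputable def H (r ρ x : ℝ) : ℝ :=
  (Real.sqrt (2 * ρ / Real.pi) / ∏' n : ℕ, (1 - r ^ (2 * n + 1))) *
    ∑' n : ℕ,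
      (r ^ (-(2 * (n : ℤ))) / ∏ k ∈ Finset.Icc 1 n, (1 - r ^ (-(2 * (k : ℤ))))) *
        Real.exp (-ρ * r ^ (-(2 * (n : ℤ))) * x ^ 2 / 2)

lemma aux_key (q : ℝ) (hq0 : 0 < q) (hq1 : q < 1) :
    ∑' n : ℕ, q ^ (-(n : ℤ)) / ∏ k ∈ Finset.Icc 1 n, (1 - q ^ (-(k : ℤ))) = 0 := by
  have hqne : q ≠ 0 := hq0.ne'
  set a : ℕ → ℝ := fun n => q ^ (-(n : ℤ)) / ∏ k ∈ Finset.Icc 1 n, (1 - q ^ (-(k : ℤ)))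
    with ha
  have hzpow : ∀ n : ℕ, q ^ (-(n : ℤ)) = (q ^ n)⁻¹ := by
    intro n; rw [zpow_neg, zpow_natCast]
  have hpowpos : ∀ n : ℕ, 0 < q ^ n := fun n => pow_pos hq0 n
  have hfac : ∀ k : ℕ, 1 ≤ k → 1 - q ^ (-(k : ℤ)) < 0 := by
    intro k hk
    have h1 : q ^ k < 1 := pow_lt_one₀ hq0.le hq1 (by omega)
    have h2 : (1 : ℝ) < (q ^ k)⁻¹ := (one_lt_inv₀ (hpowpos k)).2 h1
    rw [hzpow]; linarith
  have hP : ∀ n : ℕ, (∏ k ∈ Finset.Icc 1 n, (1 - q ^ (-(k : ℤ)))) ≠ 0 := by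
    intro n
    refine Finset.prod_ne_zero_iff.2 fun k hk => ?_
    exact (hfac k (Finset.mem_Icc.1 hk).1).ne
  have hane : ∀ n, a n ≠ 0 := by
    intro n
    simp only [ha]
    exact div_ne_zero (zpow_ne_zero _ hqne) (hP n)
  have hq1n : ∀ n : ℕ, (1 : ℝ) - q ^ (n + 1) > 0 := by
    intro n
    have : q ^ (n + 1) < 1 := pow_lt_one₀ hq0.le hq1 (by omega)
    linarith
  -- key recurrence
  have L1 : ∀ n : ℕ, a (n + 1) * (1 - q ^ (n + 1)) = -(a n * q ^ n) := by
    intro n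
    have hprod : (∏ k ∈ Finset.Icc 1 (n + 1), (1 - q ^ (-(k : ℤ)))) =
        (∏ k ∈ Finset.Icc 1 n, (1 - q ^ (-(k : ℤ)))) * (1 - q ^ (-((n + 1 : ℕ) : ℤ))) :=
      Finset.prod_Icc_succ_top (by omega) _
    have h1 : ((1 : ℝ) - (q ^ (n + 1))⁻¹) ≠ 0 := by
      have := hfac (n + 1) (by omega); rw [hzpow] at this; linarith
    have hb : (q ^ (n + 1) : ℝ) ≠ 0 := (hpowpos _).ne'
    have hg : (q ^ n : ℝ) ≠ 0 := (hpowpos _).ne'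
    simp only [ha]
    rw [hprod]
    set P := ∏ k ∈ Finset.Icc 1 n, (1 - q ^ (-(k : ℤ))) with hPdef
    clear_value P
    have hPne : P ≠ 0 := hPdef ▸ hP n
    rw [hzpow (n + 1), hzpow n]
    have hv : 1 - q ^ (n + 1) = -(q ^ (n + 1) * (1 - (q ^ (n + 1))⁻¹)) := by
      rw [mul_sub, mul_one, mul_inv_cancel₀ hb]; ring
    conv_rhs => rw [div_mul_eq_mul_div, inv_mul_cancel₀ hg, one_div]
    rw [hv, mul_neg, neg_inj, div_mul_eq_mul_div, ← mul_assoc, inv_mul_cancel₀ hb, one_mul,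
      div_eq_iff (mul_ne_zero hPne h1), ← mul_assoc, inv_mul_cancel₀ hPne, one_mul]
  -- partial sums telescope
  have L2 : ∀ N : ℕ, ∑ i ∈ Finset.range (N + 1), a i = a N * q ^ N := by
    intro N
    induction N with
    | zero => simp
    | succ N ih =>
      rw [Finset.sum_range_succ, ih]
      linear_combination L1 N
  -- the partial sums tend to 0
  have hratio : Filter.Tendsto (fun n : ℕ => q ^ (n + 1) / (1 - q ^ (n + 1)))
      Filter.atTop (nhds 0) := by
    have hnum : Filter.Tendsto (fun n : ℕ => q ^ (n + 1)) Filter.atTop (nhds 0) := by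
      have := tendsto_pow_atTop_nhds_zero_of_lt_one hq0.le hq1
      exact (Filter.tendsto_add_atTop_iff_nat 1).2 this
    have hden : Filter.Tendsto (fun n : ℕ => (1 : ℝ) - q ^ (n + 1)) Filter.atTop (nhds 1) := by
      simpa using tendsto_const_nhds.sub hnum
    have h := hnum.div hden one_ne_zero; rw [zero_div] at h; exact h
  have hT0 : Filter.Tendsto (fun N : ℕ => a N * q ^ N) Filter.atTop (nhds 0) := by
    set T : ℕ → ℝ := fun N => a N * q ^ N with hT
    have hTne : ∀ n, T n ≠ 0 := fun n => mul_ne_zero (hane n) (hpowpos n).ne'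
    have hTratio : ∀ n : ℕ, ‖T (n + 1)‖ / ‖T n‖ = q ^ (n + 1) / (1 - q ^ (n + 1)) := by
      intro n
      have h1 := L1 n
      have h2 : T (n + 1) = -(T n) * (q ^ (n + 1) / (1 - q ^ (n + 1))) := by
        have h3 : ((1 : ℝ) - q ^ (n + 1)) ≠ 0 := (hq1n n).ne'
        have h4 : a (n + 1) = -(a n * q ^ n) / (1 - q ^ (n + 1)) := by
          rw [eq_div_iff h3]; exact L1 n
        simp only [hT, h4]
        ring
      rw [h2]
      rw [norm_mul, norm_neg, mul_comm, mul_div_assoc, div_self (norm_ne_zero_iff.2 (hTne n)),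
        mul_one]
      rw [Real.norm_eq_abs, abs_div, abs_of_pos (hpowpos (n + 1)), abs_of_pos (hq1n n)]
    have hsum : Summable T := by
      refine summable_of_ratio_test_tendsto_lt_one one_pos (Filter.Eventually.of_forall hTne) ?_
      simpa only [hTratio] using hratio
    exact hsum.tendsto_atTop_zero
  -- conclude
  by_cases hsa : Summable a
  · have h1 : Filter.Tendsto (fun N : ℕ => ∑ i ∈ Finset.range N, a i)
        Filter.atTop (nhds (∑' n, a n)) := hsa.hasSum.tendsto_sum_nat
    have h2 : Filter.Tendsto (fun N : ℕ => ∑ i ∈ Finset.range (N + 1), a i)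
        Filter.atTop (nhds (∑' n, a n)) := (Filter.tendsto_add_atTop_iff_nat 1).2 h1
    have h3 : Filter.Tendsto (fun N : ℕ => ∑ i ∈ Finset.range (N + 1), a i)
        Filter.atTop (nhds 0) := by
      simpa only [L2] using hT0
    exact tendsto_nhds_unique h2 h3
  · exact tsum_eq_zero_of_not_summable hsa

theorem stmt4 (r ρ : ℝ) (hr0 : 0 < r) (hr1 : r < 1) (hρ : 0 < ρ) :
    H r ρ 0 = 0 ∧
    ∀ q : ℝ, 0 < q → q < 1 →
      ∑' n : ℕ, q ^ (-(n : ℤ)) / ∏ k ∈ Finset.Icc 1 n, (1 - q ^ (-(k : ℤ))) = 0 := by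
  constructor
  · unfold H
    have hpow : ∀ m : ℕ, r ^ (-(2 * (m : ℤ))) = (r ^ 2) ^ (-(m : ℤ)) := by
      intro m
      rw [show (-(2 * (m : ℤ))) = 2 * (-(m : ℤ)) by ring, zpow_mul]
      norm_num
    have hsum : (∑' n : ℕ,
        (r ^ (-(2 * (n : ℤ))) / ∏ k ∈ Finset.Icc 1 n, (1 - r ^ (-(2 * (k : ℤ))))) *
          Real.exp (-ρ * r ^ (-(2 * (n : ℤ))) * (0:ℝ) ^ 2 / 2)) = 0 := by
      have : ∀ n : ℕ,
          (r ^ (-(2 * (n : ℤ))) / ∏ k ∈ Finset.Icc 1 n, (1 - r ^ (-(2 * (k : ℤ))))) *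
            Real.exp (-ρ * r ^ (-(2 * (n : ℤ))) * (0:ℝ) ^ 2 / 2)
          = (r ^ 2) ^ (-(n : ℤ)) / ∏ k ∈ Finset.Icc 1 n, (1 - (r ^ 2) ^ (-(k : ℤ))) := by
        intro n
        simp only [hpow]
        rw [show (-ρ * (r ^ 2) ^ (-(n : ℤ)) * (0:ℝ) ^ 2 / 2) = 0 by ring, Real.exp_zero,
          mul_one]
      rw [tsum_congr this]
      exact aux_key (r ^ 2) (by positivity) (by nlinarith)
    rw [hsum, mul_zero]
  · intro q hq0 hq1
    exact aux_key q hq0 hq1
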